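/- Let Δ be a numerical semigroup, d ≥ 2, and let M be a submonoid of (ℕ,+) with M/d = Δ. Set A = msg(M) \ dΔ, the minimal generators of M not lying in dΔ. Then M = ⟨A⟩ + dΔ, and for every subset B ⊆ M with M = ⟨B⟩ + dΔ one has A ⊆ B; i.e., A is the unique minimal M_d(Δ)-system of generators of M. -/

import Mathlib

/-- A submonoid of (ℕ,+), as a set. -/
def IsSubmonoidN (M : Set ℕ) : Prop :=
  0 ∈ M ∧ ∀ a b : ℕ, a ∈ M → b ∈ M → a + b ∈ M

/-- A numerical semigroup: a submonoid of ℕ with finite complement. -/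
def IsNumericalSemigroup (S : Set ℕ) : Prop :=
  IsSubmonoidN S ∧ (Sᶜ : Set ℕ).Finite

/-- The quotient A/d = {x : d·x ∈ A}. -/
def quotSet (A : Set ℕ) (d : ℕ) : Set ℕ := {x | d * x ∈ A}

/-- The dilation d·A = {d·s : s ∈ A}. -/
def dilate (d : ℕ) (A : Set ℕ) : Set ℕ := (fun s => d * s) '' A

/-- Sumset A + B. -/
def setAdd (A B : Set ℕ) : Set ℕ := {n | ∃ a ∈ A, ∃ b ∈ B, n = a + b}

/-- Minimal system of generators: nonzero elements not a sum of two nonzero elements. -/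
def msg (S : Set ℕ) : Set ℕ :=
  {x | x ∈ S ∧ x ≠ 0 ∧ ∀ a b : ℕ, a ∈ S → b ∈ S → a ≠ 0 → b ≠ 0 → x ≠ a + b}

/-- Frobenius number: largest element of the complement. -/
noncomputable def frob (S : Set ℕ) : ℕ := sSup (Sᶜ : Set ℕ)

/-- Genus: number of gaps. -/
noncomputable def genus (S : Set ℕ) : ℕ := (Sᶜ : Set ℕ).ncard

/-- Multiplicity: least nonzero element. -/
noncomputable def multy (S : Set ℕ) : ℕ := sInf {x | x ∈ S ∧ x ≠ 0}

/-- n(S) = number of elements of S below the Frobenius number. -/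
noncomputable def nnum (S : Set ℕ) : ℕ := {s | s ∈ S ∧ s < frob S}.ncard

/-- Embedding dimension. -/
noncomputable def edim (S : Set ℕ) : ℕ := (msg S).ncard

/-- The semigroup Δ_d(a) = dΔ ∪ ⋃_{i=1}^{d-1} (da+i+dΔ). -/
def Deltada (d a : ℕ) (Δ : Set ℕ) : Set ℕ :=
  dilate d Δ ∪ ⋃ i ∈ Finset.Ico 1 d, (fun s => d * a + i + d * s) '' Δ

/-- Submonoid of ℕ generated by X, as a set. -/
def genBy (X : Set ℕ) : Set ℕ := (AddSubmonoid.closure X : Set ℕ)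

/-- Multiples of x. -/
def natMultiples (x : ℕ) : Set ℕ := {n | ∃ k : ℕ, n = k * x}

/-- Apéry set of S with respect to m. -/
def apery (S : Set ℕ) (m : ℕ) : Set ℕ := {s | s ∈ S ∧ ∀ t ∈ S, s ≠ t + m}

/-- Pseudo-Frobenius numbers, as integers. -/
def PF (S : Set ℕ) : Set ℤ :=
  {z | (∀ n : ℕ, (n : ℤ) = z → n ∉ S) ∧
    ∀ s : ℕ, s ∈ S → s ≠ 0 → ∃ m : ℕ, m ∈ S ∧ (m : ℤ) = z + s}

theorem stmt12 (Δ : Set ℕ) (hΔ : IsNumericalSemigroup Δ) (d : ℕ) (hd : 2 ≤ d)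
    (M : Set ℕ) (hM : IsSubmonoidN M) (hq : quotSet M d = Δ)
    (A : Set ℕ) (hA : A = msg M \ dilate d Δ) :
    M = setAdd (genBy A) (dilate d Δ) ∧
    ∀ B : Set ℕ, B ⊆ M → M = setAdd (genBy B) (dilate d Δ) → A ⊆ B := by
  obtain ⟨hM0, hMadd⟩ := hM
  obtain ⟨⟨hΔ0, hΔadd⟩, _⟩ := hΔ
  have hdΔM : dilate d Δ ⊆ M := by
    rintro _ ⟨s, hs, rfl⟩
    have : s ∈ quotSet M d := by rw [hq]; exact hs
    exact this
  have hdΔadd : ∀ a b : ℕ, a ∈ dilate d Δ → b ∈ dilate d Δ → a + b ∈ dilate d Δ := by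
    rintro _ _ ⟨s, hs, rfl⟩ ⟨t, ht, rfl⟩
    exact ⟨s + t, hΔadd s t hs ht, by ring⟩
  have h0Δ : (0:ℕ) ∈ dilate d Δ := ⟨0, hΔ0, by ring⟩
  set Msub : AddSubmonoid ℕ :=
    { carrier := M, zero_mem' := hM0, add_mem' := fun {a b} ha hb => hMadd a b ha hb } with hMsub
  have genSub : ∀ X : Set ℕ, X ⊆ M → genBy X ⊆ M := by
    intro X hX x hx
    have : AddSubmonoid.closure X ≤ Msub := AddSubmonoid.closure_le.mpr hX
    exact this hx
  have hAM : A ⊆ M := by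
    rw [hA]; rintro x ⟨⟨hx, _⟩, _⟩; exact hx
  have key : ∀ m, m ∈ M → m ∈ setAdd (genBy A) (dilate d Δ) := by
    intro m
    induction m using Nat.strong_induction_on with
    | _ m ih =>
      intro hm
      by_cases h0 : m = 0
      · exact ⟨0, (AddSubmonoid.closure A).zero_mem, 0, h0Δ, by simp [h0]⟩
      by_cases hmsg : m ∈ msg M
      · by_cases hdil : m ∈ dilate d Δ
        · exact ⟨0, (AddSubmonoid.closure A).zero_mem, m, hdil, by simp⟩
        · exact ⟨m, AddSubmonoid.subset_closure (by rw [hA]; exact ⟨hmsg, hdil⟩), 0, h0Δ, by simp⟩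
      · have hsum : ∃ a b : ℕ, a ∈ M ∧ b ∈ M ∧ a ≠ 0 ∧ b ≠ 0 ∧ m = a + b := by
          by_contra hc
          exact hmsg ⟨hm, h0, fun a b ha hb ha0 hb0 heq => hc ⟨a, b, ha, hb, ha0, hb0, heq⟩⟩
        obtain ⟨a, b, ha, hb, ha0, hb0, rfl⟩ := hsum
        obtain ⟨ga, hga, wa, hwa, hea⟩ := ih a (by omega) ha
        obtain ⟨gb, hgb, wb, hwb, heb⟩ := ih b (by omega) hb
        exact ⟨ga + gb, (AddSubmonoid.closure A).add_mem hga hgb,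
          wa + wb, hdΔadd _ _ hwa hwb, by omega⟩
  constructor
  · apply Set.eq_of_subset_of_subset
    · exact key
    · rintro _ ⟨g, hg, w, hw, rfl⟩
      exact hMadd _ _ (genSub A hAM hg) (hdΔM hw)
  · intro B hB hMB x hx
    have hxA := hx
    rw [hA] at hxA
    obtain ⟨hxmsg, hxdil⟩ := hxA
    obtain ⟨hxM, hx0, hxirr⟩ := hxmsg
    have : x ∈ setAdd (genBy B) (dilate d Δ) := by rw [← hMB]; exact hxM
    obtain ⟨g, hg, w, hw, rfl⟩ := this
    have hgM : g ∈ M := genSub B hB hg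
    have hwM : w ∈ M := hdΔM hw
    have hw0 : w = 0 := by
      by_contra hw0
      by_cases hg0 : g = 0
      · exact hxdil (by simpa [hg0] using hw)
      · exact hxirr g w hgM hwM hg0 hw0 rfl
    subst hw0
    -- g ∈ closure B, g ∈ msg M ⇒ g ∈ B
    have hP : ∀ y ∈ AddSubmonoid.closure B,
        y ∈ M ∧ (y = 0 ∨ y ∈ B ∨ ∃ a b : ℕ, a ∈ M ∧ b ∈ M ∧ a ≠ 0 ∧ b ≠ 0 ∧ y = a + b) := by
      intro y hy
      induction hy using AddSubmonoid.closure_induction with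
      | mem z hz => exact ⟨hB hz, Or.inr (Or.inl hz)⟩
      | zero => exact ⟨hM0, Or.inl rfl⟩
      | add a b _ _ iha ihb =>
        refine ⟨hMadd a b iha.1 ihb.1, ?_⟩
        by_cases ha0 : a = 0
        · simpa [ha0] using ihb.2
        by_cases hb0 : b = 0
        · simpa [hb0] using iha.2
        exact Or.inr (Or.inr ⟨a, b, iha.1, ihb.1, ha0, hb0, rfl⟩)
    obtain ⟨-, hcase⟩ := hP g hg
    rcases hcase with h | h | ⟨a, b, ha, hb, ha0, hb0, heq⟩
    · simp [h] at hx0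
    · simpa using h
    · exact absurd (by simpa using heq) (hxirr a b ha hb ha0 hb0)
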